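/- Assume λ + μ² ≠ 0 and let P, Q, R, S be a pqrs-quad. Then the two constraints μ·P(0) + Q(0) + R(0) = 0 and λ·P(0) − μ·Q(0) + S(0) = 0 hold if and only if the C-relations hold, i.e. for every w ∈ ℂ: P(−w) = −(λ+μ²)⁻¹·e^{2(1−ℓ)w}·(μ·e^{2w}·R(w) + S(w)); Q(−w) = −(λ+μ²)⁻¹·e^{−2ℓw}·(λ·e^{2w}·R(w) − μ·S(w)); R(−w) = −e^{2(1−ℓ)w}·(μ·e^{2w}·P(w) + Q(w)); S(−w) = −e^{−2ℓw}·(λ·e^{2w}·P(w) − μ·Q(w)). (The constraints are μp(1)+q(1)+r(1)=0 and λp(1)−μq(1)+s(1)=0 at z = 1, since e^0 = 1.) -/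

import Mathlib

open Set

lemma aux_tri3 {k1 k2 k3 a1 a2 a3 : ℂ} {m : ℝ} (h1 : ‖a1‖ ≤ m) (h2 : ‖a2‖ ≤ m)
    (h3 : ‖a3‖ ≤ m) : ‖k1 * a1 + k2 * a2 + k3 * a3‖ ≤ (‖k1‖ + ‖k2‖ + ‖k3‖) * m := by
  calc ‖k1 * a1 + k2 * a2 + k3 * a3‖ ≤ ‖k1 * a1‖ + ‖k2 * a2‖ + ‖k3 * a3‖ := norm_add₃_le
    _ = ‖k1‖ * ‖a1‖ + ‖k2‖ * ‖a2‖ + ‖k3‖ * ‖a3‖ := by simp [norm_mul]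
    _ ≤ ‖k1‖ * m + ‖k2‖ * m + ‖k3‖ * m := by gcongr
    _ = (‖k1‖ + ‖k2‖ + ‖k3‖) * m := by ring

noncomputable def pqrsD (ell lam mu : ℂ) (P Q R S : ℂ → ℂ) (w : ℂ) : ℂ × ℂ × ℂ × ℂ :=
  ((lam + mu ^ 2) * P (-w) +
      Complex.exp (2 * (1 - ell) * w) * (mu * Complex.exp (2 * w) * R w + S w),
   (lam + mu ^ 2) * Q (-w) +
      Complex.exp (-(2 * ell) * w) * (lam * Complex.exp (2 * w) * R w - mu * S w),
   R (-w) + Complex.exp (2 * (1 - ell) * w) * (mu * Complex.exp (2 * w) * P w + Q w),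
   S (-w) + Complex.exp (-(2 * ell) * w) * (lam * Complex.exp (2 * w) * P w - mu * Q w))

noncomputable def pqrsV (ell lam mu : ℂ) (P Q R S : ℂ → ℂ) (w : ℂ) : ℂ × ℂ × ℂ × ℂ :=
  ((-(mu * Complex.exp w + ell - 1)) * (pqrsD ell lam mu P Q R S w).1
      + Complex.exp w * (pqrsD ell lam mu P Q R S w).2.1
      + (-((lam + mu ^ 2) * Complex.exp (-w))) * (pqrsD ell lam mu P Q R S w).2.2.1,
   ((ell + 1) * mu * Complex.exp (-(2 * w)) - lam * Complex.exp (-w))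
        * (pqrsD ell lam mu P Q R S w).1
      + (-(mu * Complex.exp (-w))) * (pqrsD ell lam mu P Q R S w).2.1
      + (-((lam + mu ^ 2) * Complex.exp (-w))) * (pqrsD ell lam mu P Q R S w).2.2.2,
   Complex.exp w * (pqrsD ell lam mu P Q R S w).1
      + (mu * Complex.exp (-w) - 2 * (ell - 1)) * (pqrsD ell lam mu P Q R S w).2.2.1
      + Complex.exp w * (pqrsD ell lam mu P Q R S w).2.2.2,
   Complex.exp w * (pqrsD ell lam mu P Q R S w).2.1
      + ((ell + 1) * mu * Complex.exp (-(2 * w)) - lam * Complex.exp (-w))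
        * (pqrsD ell lam mu P Q R S w).2.2.1
      + (mu * Complex.exp w - (ell - 1)) * (pqrsD ell lam mu P Q R S w).2.2.2)

noncomputable def pqrsC (ell lam mu : ℂ) (w : ℂ) : ℝ :=
  ‖mu * Complex.exp w + ell - 1‖ + ‖Complex.exp w‖ + ‖Complex.exp (-w)‖
    + ‖(ell + 1) * mu * Complex.exp (-(2 * w)) - lam * Complex.exp (-w)‖
    + ‖mu * Complex.exp (-w)‖ + ‖(lam + mu ^ 2) * Complex.exp (-w)‖ + ‖Complex.exp w‖
    + ‖mu * Complex.exp (-w) - 2 * (ell - 1)‖ + ‖mu * Complex.exp w - (ell - 1)‖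

lemma pqrsC_cont (ell lam mu : ℂ) : Continuous (pqrsC ell lam mu) := by
  unfold pqrsC; fun_prop

lemma pqrs_bound (ell lam mu : ℂ) (P Q R S : ℂ → ℂ) (w : ℂ) :
    ‖pqrsV ell lam mu P Q R S w‖ ≤ pqrsC ell lam mu w * ‖pqrsD ell lam mu P Q R S w‖ := by
  set D := pqrsD ell lam mu P Q R S w with hD
  have m1 : ‖D.1‖ ≤ ‖D‖ := norm_fst_le D
  have m2 : ‖D.2.1‖ ≤ ‖D‖ := (norm_fst_le D.2).trans (norm_snd_le D)
  have m3 : ‖D.2.2.1‖ ≤ ‖D‖ := ((norm_fst_le D.2.2).trans (norm_snd_le D.2)).trans (norm_snd_le D)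
  have m4 : ‖D.2.2.2‖ ≤ ‖D‖ := ((norm_snd_le D.2.2).trans (norm_snd_le D.2)).trans (norm_snd_le D)
  have hDn : (0:ℝ) ≤ ‖D‖ := norm_nonneg _
  have n1 := norm_nonneg (mu * Complex.exp w + ell - 1)
  have n2 := norm_nonneg (Complex.exp w)
  have n3 := norm_nonneg (Complex.exp (-w))
  have n4 := norm_nonneg ((ell + 1) * mu * Complex.exp (-(2 * w)) - lam * Complex.exp (-w))
  have n5 := norm_nonneg (mu * Complex.exp (-w))
  have n6 := norm_nonneg ((lam + mu ^ 2) * Complex.exp (-w))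
  have n7 := norm_nonneg (mu * Complex.exp (-w) - 2 * (ell - 1))
  have n8 := norm_nonneg (mu * Complex.exp w - (ell - 1))
  have key : ∀ x : ℂ × ℂ × ℂ × ℂ, ‖x.1‖ ≤ pqrsC ell lam mu w * ‖D‖ →
      ‖x.2.1‖ ≤ pqrsC ell lam mu w * ‖D‖ → ‖x.2.2.1‖ ≤ pqrsC ell lam mu w * ‖D‖ →
      ‖x.2.2.2‖ ≤ pqrsC ell lam mu w * ‖D‖ → ‖x‖ ≤ pqrsC ell lam mu w * ‖D‖ := by
    intro x h1 h2 h3 h4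
    rw [Prod.norm_def, Prod.norm_def, Prod.norm_def]
    exact max_le h1 (max_le h2 (max_le h3 h4))
  refine key _ ?_ ?_ ?_ ?_
  · refine (aux_tri3 m1 m2 m3).trans (mul_le_mul_of_nonneg_right ?_ hDn)
    simp only [pqrsC, norm_neg]; linarith
  · refine (aux_tri3 m1 m2 m4).trans (mul_le_mul_of_nonneg_right ?_ hDn)
    simp only [pqrsC, norm_neg]; linarith
  · refine (aux_tri3 m1 m3 m4).trans (mul_le_mul_of_nonneg_right ?_ hDn)
    simp only [pqrsC, norm_neg]; linarith
  · refine (aux_tri3 m2 m3 m4).trans (mul_le_mul_of_nonneg_right ?_ hDn)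
    simp only [pqrsC, norm_neg]; linarith

lemma aux_vanish {f v : ℂ → ℂ × ℂ × ℂ × ℂ} {C : ℂ → ℝ}
    (hd : ∀ w, HasDerivAt f (v w) w) (hC : Continuous C)
    (hb : ∀ w, ‖v w‖ ≤ C w * ‖f w‖) (h0 : f 0 = 0) (w₀ : ℂ) : f w₀ = 0 := by
  have hfc : Continuous f := Differentiable.continuous (fun w => (hd w).differentiableAt)
  have hline : Continuous (fun t : ℝ => (t : ℂ) * w₀) :=
    Complex.continuous_ofReal.mul continuous_const
  set g : ℝ → ℂ × ℂ × ℂ × ℂ := fun t => f ((t : ℂ) * w₀) with hgdef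
  have hg : ∀ t : ℝ, HasDerivAt g (w₀ • v ((t : ℂ) * w₀)) t := by
    intro t
    have h1 : HasDerivAt (fun t : ℝ => (t : ℂ) * w₀) w₀ t := by
      simpa using (Complex.ofRealCLM.hasDerivAt (x := t)).mul_const w₀
    exact (hd ((t : ℂ) * w₀)).scomp t h1
  obtain ⟨K0, hK0⟩ := (isCompact_Icc (a := (0:ℝ)) (b := 1)).exists_bound_of_continuousOn
    ((hC.comp hline).continuousOn)
  set K : ℝ := ‖w₀‖ * max K0 0 with hKdef
  have hcont : ContinuousOn g (Icc (0:ℝ) 1) := (hfc.comp hline).continuousOn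
  have hderiv : ∀ x ∈ Ico (0:ℝ) 1,
      HasDerivWithinAt g (w₀ • v ((x : ℂ) * w₀)) (Ici x) x :=
    fun x _ => (hg x).hasDerivWithinAt
  have ha : ‖g 0‖ ≤ 0 := by simp [hgdef, h0]
  have hbound : ∀ x ∈ Ico (0:ℝ) 1, ‖w₀ • v ((x : ℂ) * w₀)‖ ≤ K * ‖g x‖ + 0 := by
    intro x hx
    have hxmem : x ∈ Icc (0:ℝ) 1 := ⟨hx.1, le_of_lt hx.2⟩
    have h1 : C ((x : ℂ) * w₀) ≤ max K0 0 := by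
      have h2 : C ((x : ℂ) * w₀) ≤ ‖C ((x : ℂ) * w₀)‖ := le_abs_self _
      have h2b : ‖C ((x : ℂ) * w₀)‖ ≤ K0 := by simpa using hK0 x hxmem
      exact h2.trans (h2b.trans (le_max_left _ _))
    have h3 : ‖w₀ • v ((x : ℂ) * w₀)‖ = ‖w₀‖ * ‖v ((x : ℂ) * w₀)‖ := norm_smul _ _
    have h4 := hb ((x : ℂ) * w₀)
    have h5 : (0:ℝ) ≤ ‖f ((x : ℂ) * w₀)‖ := norm_nonneg _
    have h6 : (0:ℝ) ≤ ‖w₀‖ := norm_nonneg _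
    rw [h3, hKdef]
    have h7 : ‖v ((x : ℂ) * w₀)‖ ≤ max K0 0 * ‖g x‖ := by
      refine h4.trans ?_
      exact mul_le_mul_of_nonneg_right h1 h5
    nlinarith [norm_nonneg (v ((x : ℂ) * w₀))]
  have key := norm_le_gronwallBound_of_norm_deriv_right_le hcont hderiv ha hbound
  have := key 1 ⟨zero_le_one, le_refl 1⟩
  rw [gronwallBound_ε0_δ0] at this
  have hg1 : g 1 = 0 := norm_le_zero_iff.mp this
  simpa [hgdef] using hg1

set_option maxHeartbeats 3200000 in
theorem statement_1 (ell lam mu : ℂ) (hne : lam + mu ^ 2 ≠ 0) (P Q R S : ℂ → ℂ)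
    (hP : Differentiable ℂ P) (hQ : Differentiable ℂ Q)
    (hR : Differentiable ℂ R) (hS : Differentiable ℂ S)
    (hsys1 : ∀ w : ℂ, Complex.exp w * deriv P w =
      (mu + (ell - 1) * Complex.exp w) * P w - Q w + Complex.exp (2 * w) * R w)
    (hsys2 : ∀ w : ℂ, deriv Q w =
      Complex.exp w * ((lam - (ell + 1) * mu * Complex.exp w) * P w + mu * Q w + S w))
    (hsys3 : ∀ w : ℂ, Complex.exp w * deriv R w =
      -(lam + mu ^ 2) * P w + Complex.exp w * (2 * (ell - 1) - mu * Complex.exp w) * R w - S w)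
    (hsys4 : ∀ w : ℂ, Complex.exp w * deriv S w =
      -(lam + mu ^ 2) * Q w + Complex.exp (2 * w) * (lam - (ell + 1) * mu * Complex.exp w) * R w
        + ((ell - 1) * Complex.exp w - mu) * S w) :
    (mu * P 0 + Q 0 + R 0 = 0 ∧ lam * P 0 - mu * Q 0 + S 0 = 0) ↔
    (∀ w : ℂ,
      P (-w) = -(lam + mu ^ 2)⁻¹ * Complex.exp (2 * (1 - ell) * w) *
        (mu * Complex.exp (2 * w) * R w + S w) ∧
      Q (-w) = -(lam + mu ^ 2)⁻¹ * Complex.exp (-(2 * ell) * w) *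
        (lam * Complex.exp (2 * w) * R w - mu * S w) ∧
      R (-w) = -Complex.exp (2 * (1 - ell) * w) * (mu * Complex.exp (2 * w) * P w + Q w) ∧
      S (-w) = -Complex.exp (-(2 * ell) * w) * (lam * Complex.exp (2 * w) * P w - mu * Q w)) := by
  have hP' : ∀ z : ℂ, deriv P z = Complex.exp (-z) *
      ((mu + (ell - 1) * Complex.exp z) * P z - Q z + Complex.exp (2 * z) * R z) := by
    intro z
    rw [Complex.exp_neg, inv_mul_eq_div, eq_div_iff (Complex.exp_ne_zero z)]
    linear_combination hsys1 z
  have hR' : ∀ z : ℂ, deriv R z = Complex.exp (-z) *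
      (-(lam + mu ^ 2) * P z + Complex.exp z * (2 * (ell - 1) - mu * Complex.exp z) * R z
        - S z) := by
    intro z
    rw [Complex.exp_neg, inv_mul_eq_div, eq_div_iff (Complex.exp_ne_zero z)]
    linear_combination hsys3 z
  have hS' : ∀ z : ℂ, deriv S z = Complex.exp (-z) *
      (-(lam + mu ^ 2) * Q z + Complex.exp (2 * z) * (lam - (ell + 1) * mu * Complex.exp z) * R z
        + ((ell - 1) * Complex.exp z - mu) * S z) := by
    intro z
    rw [Complex.exp_neg, inv_mul_eq_div, eq_div_iff (Complex.exp_ne_zero z)]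
    linear_combination hsys4 z
  constructor
  · rintro ⟨h1, h2⟩
    -- derivative of the difference vector
    have hDeriv : ∀ w : ℂ, HasDerivAt (pqrsD ell lam mu P Q R S)
        (pqrsV ell lam mu P Q R S w) w := by
      intro w
      have hExp : ∀ k : ℂ, HasDerivAt (fun w : ℂ => Complex.exp (k * w))
          (k * Complex.exp (k * w)) w := by
        intro k
        have := ((hasDerivAt_id w).const_mul k).cexp
        simpa [mul_comm, mul_one] using this
      have hPneg : HasDerivAt (fun w : ℂ => P (-w)) (deriv P (-w) * -1) w :=
        HasDerivAt.comp w (hP (-w)).hasDerivAt (hasDerivAt_neg' w)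
      have hQneg : HasDerivAt (fun w : ℂ => Q (-w)) (deriv Q (-w) * -1) w :=
        HasDerivAt.comp w (hQ (-w)).hasDerivAt (hasDerivAt_neg' w)
      have hRneg : HasDerivAt (fun w : ℂ => R (-w)) (deriv R (-w) * -1) w :=
        HasDerivAt.comp w (hR (-w)).hasDerivAt (hasDerivAt_neg' w)
      have hSneg : HasDerivAt (fun w : ℂ => S (-w)) (deriv S (-w) * -1) w :=
        HasDerivAt.comp w (hS (-w)).hasDerivAt (hasDerivAt_neg' w)
      -- exponential rewrites
      have e2 : Complex.exp (2 * w) = Complex.exp w ^ 2 := by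
        rw [show (2:ℂ) * w = w + w by ring, Complex.exp_add, sq]
      have eA : Complex.exp (2 * (1 - ell) * w)
          = Complex.exp w ^ 2 * Complex.exp (-(2 * ell) * w) := by
        rw [show 2 * (1 - ell) * w = (2 * w) + -(2 * ell) * w by ring, Complex.exp_add, e2]
      have en : Complex.exp (-w) = 1 / Complex.exp w := by
        rw [Complex.exp_neg, one_div]
      have enn : Complex.exp (-(-w)) = Complex.exp w := by rw [neg_neg]
      have e2n : Complex.exp (2 * -w) = 1 / Complex.exp w ^ 2 := by
        rw [show (2:ℂ) * -w = -(2 * w) by ring, Complex.exp_neg, e2, one_div]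
      have e2n' : Complex.exp (-(2 * w)) = 1 / Complex.exp w ^ 2 := by
        rw [Complex.exp_neg, e2, one_div]
      have hu := Complex.exp_ne_zero w
      have hb := Complex.exp_ne_zero (2 * ell * w)
      have hd1 := (hPneg.const_mul (lam + mu ^ 2)).add ((hExp (2 * (1 - ell))).mul
        ((((hExp 2).const_mul mu).mul (hR w).hasDerivAt).add
          (hS w).hasDerivAt))
      have hd2 := (hQneg.const_mul (lam + mu ^ 2)).add ((hExp (-(2 * ell))).mul
        ((((hExp 2).const_mul lam).mul (hR w).hasDerivAt).sub
          ((hS w).hasDerivAt.const_mul mu)))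
      have hd3 := hRneg.add ((hExp (2 * (1 - ell))).mul
        ((((hExp 2).const_mul mu).mul (hP w).hasDerivAt).add (hQ w).hasDerivAt))
      have hd4 := hSneg.add ((hExp (-(2 * ell))).mul
        ((((hExp 2).const_mul lam).mul (hP w).hasDerivAt).sub
          ((hQ w).hasDerivAt.const_mul mu)))
      refine HasDerivAt.congr_deriv (hd1.prodMk (hd2.prodMk (hd3.prodMk hd4))) ?_
      simp only [pqrsV, pqrsD, Prod.mk.injEq]
      refine ⟨?_, ?_, ?_, ?_⟩ <;>
      · simp only [hP', hsys2, hR', hS', enn, e2n, e2n', eA, en, e2, Pi.add_apply, Pi.mul_apply,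
          Pi.sub_apply]
        field_simp [Complex.exp_ne_zero]
        ring
    have h0 : pqrsD ell lam mu P Q R S 0 = 0 := by
      simp only [pqrsD, neg_zero, mul_zero, zero_mul, Complex.exp_zero, mul_one, one_mul]
      rw [show (0 : ℂ × ℂ × ℂ × ℂ) = ((0:ℂ), (0:ℂ), (0:ℂ), (0:ℂ)) from rfl,
        Prod.mk.injEq, Prod.mk.injEq, Prod.mk.injEq]
      refine ⟨?_, ?_, ?_, ?_⟩
      · linear_combination mu * h1 + h2
      · linear_combination lam * h1 - mu * h2
      · linear_combination h1
      · linear_combination h2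
    have hall : ∀ w : ℂ, pqrsD ell lam mu P Q R S w = 0 :=
      aux_vanish hDeriv (pqrsC_cont ell lam mu) (pqrs_bound ell lam mu P Q R S) h0
    intro w
    have hw := hall w
    rw [Prod.ext_iff, Prod.ext_iff, Prod.ext_iff] at hw
    obtain ⟨c1, c2, c3, c4⟩ := hw
    simp only [pqrsD, Prod.fst_zero, Prod.snd_zero] at c1 c2 c3 c4
    refine ⟨?_, ?_, ?_, ?_⟩
    · field_simp [hne]
      ring_nf at c1 ⊢
      linear_combination c1
    · field_simp [hne]
      ring_nf at c2 ⊢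
      linear_combination c2
    · linear_combination c3
    · linear_combination c4
  · intro h
    have e3 := (h 0).2.2.1
    have e4 := (h 0).2.2.2
    simp only [neg_zero, mul_zero, zero_mul, Complex.exp_zero, mul_one, one_mul] at e3 e4
    constructor
    · linear_combination e3
    · linear_combination e4
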